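/- If Z ~ AbSLG(α,β), then E(Z²) = π²(70 + 49π²α² + 310π⁴αβ + 889π⁶β²)/(210 + 35π²α² + 98π⁴αβ + 155π⁶β²). -/

import Mathlib

open Real MeasureTheory Filter

noncomputable def C (α β : ℝ) : ℝ :=
  (210 + 35 * π ^ 2 * α ^ 2 + 98 * π ^ 4 * α * β + 155 * π ^ 6 * β ^ 2) / 105

noncomputable def g (z : ℝ) : ℝ := Real.exp (-z) / (1 + Real.exp (-z)) ^ 2

noncomputable def f (z α β : ℝ) : ℝ := ((1 - α * z - β * z ^ 3) ^ 2 + 1) / C α β * g z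

open Set

section Aux

lemma g_cont : Continuous g := by
  apply Continuous.div (by continuity) (by continuity)
  intro z; positivity

lemma g_even (z : ℝ) : g (-z) = g z := by
  unfold g
  rw [neg_neg, show Real.exp z = (Real.exp (-z))⁻¹ by rw [← Real.exp_neg, neg_neg]]
  have h := Real.exp_ne_zero (-z)
  field_simp
  ring

lemma g_le (z : ℝ) (hz : 0 ≤ z) : g z ≤ Real.exp (-z) := by
  unfold g
  rw [div_le_iff₀ (by positivity)]
  nlinarith [Real.exp_pos (-z), sq_nonneg (Real.exp (-z))]

lemma g_nonneg (z : ℝ) : 0 ≤ g z := by unfold g; positivity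

lemma int_pow_exp (k : ℕ) : IntegrableOn (fun z : ℝ => z ^ k * Real.exp (-z)) (Ioi 0) := by
  have h := integrableOn_rpow_mul_exp_neg_rpow (p := 1) (s := k)
    (lt_of_lt_of_le neg_one_lt_zero (Nat.cast_nonneg k)) zero_lt_one
  apply h.congr_fun ?_ measurableSet_Ioi
  intro x hx
  simp [Real.rpow_natCast]

lemma int_pow_g_Ioi (k : ℕ) : IntegrableOn (fun z : ℝ => z ^ k * g z) (Ioi 0) := by
  apply Integrable.mono' (int_pow_exp k)
  · exact ((continuous_pow k).mul g_cont).aestronglyMeasurable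
  · filter_upwards [self_mem_ae_restrict measurableSet_Ioi] with z hz
    rw [Real.norm_eq_abs, abs_mul, abs_of_nonneg (g_nonneg z),
      abs_of_nonneg (pow_nonneg (le_of_lt hz) k)]
    exact mul_le_mul_of_nonneg_left (g_le z hz.le) (pow_nonneg (le_of_lt hz) k)

lemma int_pow_g (k : ℕ) : Integrable (fun z : ℝ => z ^ k * g z) := by
  rw [← integrableOn_univ, ← Set.Iic_union_Ioi (a := (0:ℝ)), integrableOn_union]
  refine ⟨?_, int_pow_g_Ioi k⟩
  rw [← Measure.map_neg_eq_self (volume : Measure ℝ)]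
  have m : MeasurableEmbedding fun x : ℝ => -x := (Homeomorph.neg ℝ).measurableEmbedding
  rw [m.integrableOn_map_iff]
  simp_rw [Function.comp_def, neg_preimage, neg_Iic, neg_zero]
  rw [integrableOn_Ici_iff_integrableOn_Ioi]
  have heq : (fun x : ℝ => (-x) ^ k * g (-x)) = fun x : ℝ => (-1:ℝ)^k * (x ^ k * g x) := by
    funext x
    rw [g_even, neg_pow]
    ring
  rw [heq]
  exact (int_pow_g_Ioi k).const_mul _

lemma b6 : bernoulli' 6 = 1/42 := by
  have h5 : bernoulli' 5 = 0 := bernoulli'_eq_zero_of_odd (by decide) (by norm_num)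
  rw [bernoulli'_def]
  norm_num [Finset.sum_range_succ, bernoulli'_zero, bernoulli'_one, bernoulli'_two,
    bernoulli'_three, bernoulli'_four, h5, Nat.choose]

lemma b8 : bernoulli' 8 = -1/30 := by
  have h5 : bernoulli' 5 = 0 := bernoulli'_eq_zero_of_odd (by decide) (by norm_num)
  have h7 : bernoulli' 7 = 0 := bernoulli'_eq_zero_of_odd (by decide) (by norm_num)
  rw [bernoulli'_def]
  norm_num [Finset.sum_range_succ, bernoulli'_zero, bernoulli'_one, bernoulli'_two,
    bernoulli'_three, bernoulli'_four, h5, b6, h7, Nat.choose]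

theorem hasSum_zeta_six' : HasSum (fun n : ℕ => (1 : ℝ) / (n : ℝ) ^ 6) (π ^ 6 / 945) := by
  convert hasSum_zeta_nat three_ne_zero using 1
  rw [show ((bernoulli 6 : ℚ) : ℝ) = 1/42 by
    rw [bernoulli_eq_bernoulli'_of_ne_one (by norm_num), b6]; norm_num]
  norm_num [Nat.factorial]
  ring

theorem hasSum_zeta_eight' : HasSum (fun n : ℕ => (1 : ℝ) / (n : ℝ) ^ 8) (π ^ 8 / 9450) := by
  convert hasSum_zeta_nat four_ne_zero using 1
  rw [show ((bernoulli 8 : ℚ) : ℝ) = -1/30 by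
    rw [bernoulli_eq_bernoulli'_of_ne_one (by norm_num), b8]; norm_num]
  norm_num [Nat.factorial]
  ring

lemma hasSum_shift {k : ℕ} (hk : k ≠ 0) {A : ℝ}
    (h : HasSum (fun n : ℕ => (1 : ℝ) / (n : ℝ) ^ k) A) :
    HasSum (fun n : ℕ => (1 : ℝ) / ((n : ℝ) + 1) ^ k) A := by
  have h0 : (1 : ℝ) / ((0 : ℕ) : ℝ) ^ k = 0 := by
    simp [zero_pow hk]
  have := (hasSum_nat_add_iff' (f := fun n : ℕ => (1 : ℝ) / (n : ℝ) ^ k) 1).mpr h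
  simp only [Finset.range_one, Finset.sum_singleton, h0, sub_zero] at this
  convert this using 2 with n
  case e'_3 => rfl
  push_cast
  ring_nf

lemma hasSum_eta {k : ℕ} {A : ℝ}
    (h : HasSum (fun n : ℕ => (1 : ℝ) / ((n : ℝ) + 1) ^ k) A) :
    HasSum (fun n : ℕ => (-1 : ℝ) ^ n / ((n : ℝ) + 1) ^ k)
      (A - 2 * (((2 : ℝ) ^ k)⁻¹ * A)) := by
  have hodd : HasSum (fun n : ℕ => if Odd n then (1 : ℝ) / ((n : ℝ) + 1) ^ k else 0)
      (((2 : ℝ) ^ k)⁻¹ * A) := by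
    have hinj : Function.Injective (fun m : ℕ => 2 * m + 1) :=
      fun a b hab => by dsimp only at hab; omega
    rw [← Function.Injective.hasSum_iff hinj ?_]
    · have := h.mul_left ((2 : ℝ) ^ k)⁻¹
      convert this using 2 with m
      case e'_3 => rfl
      have : Odd (2 * m + 1) := ⟨m, by ring⟩
      simp only [Function.comp, this, if_pos]
      push_cast
      rw [show ((2 : ℝ) * m + 1 + 1) = 2 * (m + 1) by ring, mul_pow]
      rw [div_eq_mul_inv, div_eq_mul_inv, mul_inv]
      ring
    · intro x hx
      rw [if_neg]
      intro hox
      obtain ⟨m, hm⟩ := hox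
      exact hx ⟨m, by dsimp only; omega⟩
  have := h.sub (hodd.mul_left 2)
  convert this using 2 with n
  case e'_3 => rfl
  rcases Nat.even_or_odd n with he | ho
  · rw [if_neg (Nat.not_odd_iff_even.mpr he), he.neg_one_pow]
    ring
  · rw [if_pos ho, ho.neg_one_pow]
    ring

lemma hasSum_g {z : ℝ} (hz : 0 < z) :
    HasSum (fun n : ℕ => (-1 : ℝ) ^ n * (((n : ℝ) + 1) * Real.exp (-(((n : ℝ) + 1) * z))))
      (g z) := by
  set x := Real.exp (-z) with hxdef
  have hx0 : 0 < x := Real.exp_pos _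
  have hx1 : x < 1 := by
    rw [hxdef, Real.exp_lt_one_iff]
    linarith
  have hn : ‖-x‖ < 1 := by
    rw [norm_neg, Real.norm_eq_abs, abs_of_pos hx0]; exact hx1
  have H := hasSum_coe_mul_geometric_of_norm_lt_one hn
  have H1 := (hasSum_nat_add_iff' (f := fun n : ℕ => (n : ℝ) * (-x) ^ n) 1).mpr H
  simp only [Finset.range_one, Finset.sum_singleton, Nat.cast_zero, zero_mul, sub_zero] at H1
  have H2 := H1.neg
  have hval : -(-x / (1 - -x) ^ 2) = g z := by
    rw [g, ← hxdef]
    rw [sub_neg_eq_add]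
    ring
  rw [hval] at H2
  convert H2 using 2 with n
  case e'_3 => rfl
  have hxpow : x ^ (n + 1) = Real.exp (-(((n : ℝ) + 1) * z)) := by
    rw [hxdef, ← Real.exp_nat_mul]
    congr 1
    push_cast
    ring
  rw [← hxpow]
  push_cast
  rw [show (-x : ℝ) ^ (n + 1) = (-1) ^ (n + 1) * x ^ (n + 1) from neg_pow x (n+1)]
  rw [pow_succ]
  ring

lemma aux_int (k : ℕ) {r : ℝ} (hr : 0 < r) :
    ∫ z in Ioi (0:ℝ), z ^ k * Real.exp (-(r * z))
      = (1 / r) ^ (k + 1) * ((Nat.factorial k : ℕ) : ℝ) := by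
  have h := integral_rpow_mul_exp_neg_mul_Ioi (a := (k : ℝ) + 1) (by positivity) hr
  rw [show ((k : ℝ) + 1 - 1) = (k : ℝ) by ring] at h
  rw [show ∫ z in Ioi (0:ℝ), z ^ k * Real.exp (-(r * z))
      = ∫ t in Ioi (0:ℝ), t ^ ((k : ℝ)) * Real.exp (-(r * t)) from
    setIntegral_congr_fun measurableSet_Ioi (fun t ht => by
      rw [Real.rpow_natCast]), h]
  rw [Real.Gamma_nat_eq_factorial]
  congr 1
  rw [show ((k : ℝ) + 1) = ((k + 1 : ℕ) : ℝ) by push_cast; ring, Real.rpow_natCast]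

lemma aux_integrable (k : ℕ) {r : ℝ} (hr : 1 ≤ r) :
    IntegrableOn (fun z : ℝ => z ^ k * Real.exp (-(r * z))) (Ioi 0) := by
  apply Integrable.mono' (int_pow_exp k)
  · exact ((continuous_pow k).mul (Real.continuous_exp.comp (by continuity))).aestronglyMeasurable
  · filter_upwards [self_mem_ae_restrict measurableSet_Ioi] with z hz
    have hz0 : (0:ℝ) < z := hz
    rw [Real.norm_eq_abs, abs_mul, abs_of_nonneg (pow_nonneg hz0.le k),
      abs_of_nonneg (Real.exp_nonneg _)]
    apply mul_le_mul_of_nonneg_left _ (pow_nonneg hz0.le k)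
    apply Real.exp_le_exp.mpr
    nlinarith

lemma summable_aux {k : ℕ} (hk : 2 ≤ k) :
    Summable (fun n : ℕ => (1:ℝ) / ((n : ℝ) + 1) ^ k) := by
  have h : Summable (fun n : ℕ => (1:ℝ) / (n : ℝ) ^ k) :=
    (Real.summable_one_div_nat_pow).mpr hk
  have := (summable_nat_add_iff (f := fun n : ℕ => (1:ℝ) / (n : ℝ) ^ k) 1).mpr h
  apply this.congr
  intro n
  push_cast
  ring_nf

lemma moment_Ioi {k : ℕ} (hk : 2 ≤ k) :
    ∫ z in Ioi (0:ℝ), z ^ k * g z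
      = ((Nat.factorial k : ℕ) : ℝ) * ∑' n : ℕ, (-1:ℝ) ^ n / ((n : ℝ) + 1) ^ k := by
  set F : ℕ → ℝ → ℝ := fun n z =>
    (-1 : ℝ) ^ n * (((n : ℝ) + 1) * (z ^ k * Real.exp (-(((n : ℝ) + 1) * z)))) with hF
  have hr : ∀ n : ℕ, (0:ℝ) < (n : ℝ) + 1 := fun n => by positivity
  have hr1 : ∀ n : ℕ, (1:ℝ) ≤ (n : ℝ) + 1 := fun n => by
    have := Nat.cast_nonneg (α := ℝ) n; linarith
  have hF_int : ∀ n : ℕ, Integrable (F n) (volume.restrict (Ioi 0)) := by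
    intro n
    exact (((aux_integrable k (hr1 n)).const_mul ((n:ℝ)+1)).const_mul ((-1:ℝ)^n))
  have hnorm : ∀ n : ℕ, ∫ z in Ioi (0:ℝ), ‖F n z‖
      = ((Nat.factorial k : ℕ) : ℝ) * (1 / ((n : ℝ) + 1) ^ k) := by
    intro n
    rw [show ∫ z in Ioi (0:ℝ), ‖F n z‖
        = ∫ z in Ioi (0:ℝ), ((n : ℝ) + 1) * (z ^ k * Real.exp (-(((n : ℝ) + 1) * z))) from
      setIntegral_congr_fun measurableSet_Ioi (fun z hz => by
        have hz0 : (0:ℝ) < z := hz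
        rw [hF]
        rw [Real.norm_eq_abs, abs_mul, abs_mul, abs_mul, abs_pow, abs_neg, abs_one, one_pow,
          abs_of_nonneg (hr n).le, abs_of_nonneg (pow_nonneg hz0.le k),
          abs_of_nonneg (Real.exp_nonneg _), one_mul])]
    rw [integral_const_mul, aux_int k (hr n)]
    have h1 : ((n:ℝ)+1) ≠ 0 := (hr n).ne'
    rw [one_div, inv_pow]
    rw [pow_succ]
    field_simp
  have hF_sum : Summable fun n => ∫ z in Ioi (0:ℝ), ‖F n z‖ := by
    rw [show (fun n => ∫ z in Ioi (0:ℝ), ‖F n z‖)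
        = fun n : ℕ => ((Nat.factorial k : ℕ) : ℝ) * (1 / ((n : ℝ) + 1) ^ k) from funext hnorm]
    exact (summable_aux hk).mul_left _
  have key := integral_tsum_of_summable_integral_norm hF_int hF_sum
  have hptw : ∫ z in Ioi (0:ℝ), z ^ k * g z = ∫ z in Ioi (0:ℝ), ∑' n, F n z := by
    apply setIntegral_congr_fun measurableSet_Ioi
    intro z hz
    have hz0 : (0:ℝ) < z := hz
    have := ((hasSum_g hz0).mul_left (z ^ k)).tsum_eq
    show z ^ k * g z = ∑' n, F n z
    rw [← this]
    apply tsum_congr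
    intro n
    rw [hF]
    ring
  rw [hptw, ← key]
  have hterm : ∀ n : ℕ, ∫ z in Ioi (0:ℝ), F n z
      = (-1:ℝ) ^ n * (((Nat.factorial k : ℕ) : ℝ) * (1 / ((n : ℝ) + 1) ^ k)) := by
    intro n
    rw [hF]
    simp only []
    rw [integral_const_mul, integral_const_mul, aux_int k (hr n)]
    have h1 : ((n:ℝ)+1) ≠ 0 := (hr n).ne'
    rw [one_div, inv_pow]
    rw [pow_succ]
    field_simp
  rw [tsum_congr hterm]
  rw [← tsum_mul_left (a := ((Nat.factorial k : ℕ) : ℝ))]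
  apply tsum_congr
  intro n
  ring

lemma moment_odd {k : ℕ} (hk : Odd k) : ∫ z : ℝ, z ^ k * g z = 0 := by
  have h := integral_neg_eq_self (fun z : ℝ => z ^ k * g z) volume
  have h2 : (∫ z : ℝ, (-z) ^ k * g (-z)) = ∫ z : ℝ, -(z ^ k * g z) := by
    congr 1
    funext z
    rw [g_even, hk.neg_pow]
    ring
  rw [h2, integral_neg] at h
  linarith

lemma moment_even {k : ℕ} (hk : Even k) :
    ∫ z : ℝ, z ^ k * g z = 2 * ∫ z in Ioi (0:ℝ), z ^ k * g z := by
  rw [← integral_add_compl measurableSet_Ioi (int_pow_g k), compl_Ioi]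
  have h : (∫ z in Iic (0:ℝ), z ^ k * g z) = ∫ z in Ioi (0:ℝ), z ^ k * g z := by
    rw [show (∫ z in Iic (0:ℝ), z ^ k * g z) = ∫ z in Iic (-(0:ℝ)), z ^ k * g z by rw [neg_zero]]
    rw [← integral_comp_neg_Ioi]
    apply setIntegral_congr_fun measurableSet_Ioi
    intro z hz
    show (-z) ^ k * g (-z) = z ^ k * g z
    rw [g_even, hk.neg_pow]
  rw [h]
  ring

lemma eta2 : ∑' n : ℕ, (-1:ℝ) ^ n / ((n : ℝ) + 1) ^ 2 = π ^ 2 / 12 := by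
  rw [(hasSum_eta (hasSum_shift two_ne_zero hasSum_zeta_two)).tsum_eq]
  norm_num
  ring

lemma eta4 : ∑' n : ℕ, (-1:ℝ) ^ n / ((n : ℝ) + 1) ^ 4 = 7 * π ^ 4 / 720 := by
  rw [(hasSum_eta (hasSum_shift four_ne_zero hasSum_zeta_four)).tsum_eq]
  norm_num
  ring

lemma eta6 : ∑' n : ℕ, (-1:ℝ) ^ n / ((n : ℝ) + 1) ^ 6 = 31 * π ^ 6 / 30240 := by
  rw [(hasSum_eta (hasSum_shift (by norm_num) hasSum_zeta_six')).tsum_eq]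
  norm_num
  ring

lemma eta8 : ∑' n : ℕ, (-1:ℝ) ^ n / ((n : ℝ) + 1) ^ 8 = 127 * π ^ 8 / 1209600 := by
  rw [(hasSum_eta (hasSum_shift (by norm_num) hasSum_zeta_eight')).tsum_eq]
  norm_num
  ring

lemma M2 : ∫ z : ℝ, z ^ 2 * g z = π ^ 2 / 3 := by
  rw [moment_even (by decide), moment_Ioi (le_refl 2), eta2]
  norm_num [Nat.factorial]
  ring

lemma M4 : ∫ z : ℝ, z ^ 4 * g z = 7 * π ^ 4 / 15 := by
  rw [moment_even (by decide), moment_Ioi (by norm_num), eta4]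
  norm_num [Nat.factorial]
  ring

lemma M6 : ∫ z : ℝ, z ^ 6 * g z = 31 * π ^ 6 / 21 := by
  rw [moment_even (by decide), moment_Ioi (by norm_num), eta6]
  norm_num [Nat.factorial]
  ring

lemma M8 : ∫ z : ℝ, z ^ 8 * g z = 127 * π ^ 8 / 15 := by
  rw [moment_even (by decide), moment_Ioi (by norm_num), eta8]
  norm_num [Nat.factorial]
  ring

end Aux

theorem stmt14 (α β : ℝ) :
    ∫ z : ℝ, z ^ 2 * f z α β =
      π ^ 2 * (70 + 49 * π ^ 2 * α ^ 2 + 310 * π ^ 4 * α * β + 889 * π ^ 6 * β ^ 2) /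
        (210 + 35 * π ^ 2 * α ^ 2 + 98 * π ^ 4 * α * β + 155 * π ^ 6 * β ^ 2) := by
  have hD : (0:ℝ) < 210 + 35 * π ^ 2 * α ^ 2 + 98 * π ^ 4 * α * β + 155 * π ^ 6 * β ^ 2 := by
    nlinarith [sq_nonneg (5 * (π * α) + 7 * (π ^ 3 * β)), sq_nonneg (π ^ 3 * β), sq_nonneg π]
  have hC : C α β ≠ 0 := by
    rw [C]
    positivity
  have e : (fun z : ℝ => z ^ 2 * f z α β) = fun z : ℝ =>
      (C α β)⁻¹ * (2 * (z ^ 2 * g z) + -2 * α * (z ^ 3 * g z) + α ^ 2 * (z ^ 4 * g z)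
        + -2 * β * (z ^ 5 * g z) + 2 * (α * β) * (z ^ 6 * g z)
        + β ^ 2 * (z ^ 8 * g z)) := by
    funext z
    rw [f, div_eq_mul_inv]
    ring
  rw [e, integral_const_mul]
  have i2 : Integrable (fun z : ℝ => 2 * (z ^ 2 * g z)) volume := (int_pow_g 2).const_mul _
  have i3 : Integrable (fun z : ℝ => -2 * α * (z ^ 3 * g z)) volume := (int_pow_g 3).const_mul _
  have i4 : Integrable (fun z : ℝ => α ^ 2 * (z ^ 4 * g z)) volume := (int_pow_g 4).const_mul _
  have i5 : Integrable (fun z : ℝ => -2 * β * (z ^ 5 * g z)) volume := (int_pow_g 5).const_mul _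
  have i6 : Integrable (fun z : ℝ => 2 * (α * β) * (z ^ 6 * g z)) volume :=
    (int_pow_g 6).const_mul _
  have i8 : Integrable (fun z : ℝ => β ^ 2 * (z ^ 8 * g z)) volume := (int_pow_g 8).const_mul _
  have j3 : Integrable (fun z : ℝ => 2 * (z ^ 2 * g z) + -2 * α * (z ^ 3 * g z)) volume :=
    i2.add i3
  have j4 : Integrable (fun z : ℝ => 2 * (z ^ 2 * g z) + -2 * α * (z ^ 3 * g z)
      + α ^ 2 * (z ^ 4 * g z)) volume := j3.add i4
  have j5 : Integrable (fun z : ℝ => 2 * (z ^ 2 * g z) + -2 * α * (z ^ 3 * g z)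
      + α ^ 2 * (z ^ 4 * g z) + -2 * β * (z ^ 5 * g z)) volume := j4.add i5
  have j6 : Integrable (fun z : ℝ => 2 * (z ^ 2 * g z) + -2 * α * (z ^ 3 * g z)
      + α ^ 2 * (z ^ 4 * g z) + -2 * β * (z ^ 5 * g z) + 2 * (α * β) * (z ^ 6 * g z)) volume :=
    j5.add i6
  rw [integral_add j6 i8, integral_add j5 i6, integral_add j4 i5, integral_add j3 i4,
    integral_add i2 i3]
  rw [integral_const_mul, integral_const_mul, integral_const_mul, integral_const_mul,
    integral_const_mul, integral_const_mul]
  rw [M2, M4, M6, M8, moment_odd (by decide), moment_odd (by decide)]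
  rw [C]
  rw [div_eq_mul_inv (π ^ 2 * _)]
  rw [show ((210 + 35 * π ^ 2 * α ^ 2 + 98 * π ^ 4 * α * β + 155 * π ^ 6 * β ^ 2) / 105)⁻¹
      = 105 * (210 + 35 * π ^ 2 * α ^ 2 + 98 * π ^ 4 * α * β + 155 * π ^ 6 * β ^ 2)⁻¹ by
    rw [inv_div]; ring]
  field_simp
  ring
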